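/- Let G = F_{n,∞}, M = ⟨x_1, ..., x_n⟩ ≤ G, and H a normal finite-index subgroup of G. Let α be the smallest positive integer with x_0^α ∈ H. Then the subgroup B = ⟨x_0^α, ∪_{j∈ℤ} (H ∩ M)^{x_0^j}⟩ equals ⟨x_0^α, H ∩ M⟩, and the quotient H/B is finite cyclic. -/

import Mathlib

/-- The defining relators of the generalised Thompson group `F_{n,∞}`. -/
def thompsonRels (n : ℕ) : Set (FreeGroup ℕ) :=
  {r | ∃ i j : ℕ, j < i ∧
    r = (FreeGroup.of j)⁻¹ * FreeGroup.of i * FreeGroup.of j * (FreeGroup.of (i + n - 1))⁻¹}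

/-- The generalised Thompson group `F_{n,∞}`. -/
abbrev FnInfty (n : ℕ) : Type := PresentedGroup (thompsonRels n)

/-- The generator `x_i` of `F_{n,∞}`. -/
def xg (n i : ℕ) : FnInfty n := PresentedGroup.of i

/-- The subgroup `M = ⟨x_1, ..., x_n⟩` of `F_{n,∞}`. -/
def Msub (n : ℕ) : Subgroup (FnInfty n) := Subgroup.closure (xg n '' {i | 1 ≤ i ∧ i ≤ n})

lemma xg_rel (n : ℕ) {i j : ℕ} (h : j < i) :
    (xg n j)⁻¹ * xg n i * xg n j = xg n (i + n - 1) := by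
  have hr : ((FreeGroup.of j)⁻¹ * FreeGroup.of i * FreeGroup.of j * (FreeGroup.of (i + n - 1))⁻¹ : FreeGroup ℕ) ∈ thompsonRels n := ⟨i, j, h, rfl⟩
  have h1 : PresentedGroup.mk (thompsonRels n) ((FreeGroup.of j)⁻¹ * FreeGroup.of i * FreeGroup.of j * (FreeGroup.of (i + n - 1))⁻¹) = 1 := by
    have := Subgroup.subset_normalClosure (s := thompsonRels n) hr
    exact (QuotientGroup.eq_one_iff _).mpr this
  have h2 : (xg n j)⁻¹ * xg n i * xg n j * (xg n (i + n - 1))⁻¹ = 1 := by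
    simpa [xg, PresentedGroup.of, map_mul, map_inv] using h1
  rw [mul_inv_eq_one] at h2
  exact h2


lemma xg_mem_M (n : ℕ) (hn : 2 ≤ n) : ∀ k, 1 ≤ k → xg n k ∈ Msub n := by
  intro k
  induction k using Nat.strong_induction_on with
  | _ k ih =>
    intro hk
    rcases le_or_gt k n with h | h
    · exact Subgroup.subset_closure ⟨k, ⟨hk, h⟩, rfl⟩
    · -- k > n : k = (k-n+1) + n - 1
      have hi1 : 1 < k - n + 1 := by omega
      have hrel := xg_rel n (i := k - n + 1) (j := 1) hi1
      have hk' : k - n + 1 + n - 1 = k := by omega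
      rw [hk'] at hrel
      rw [← hrel]
      have hmem : xg n (k - n + 1) ∈ Msub n := ih _ (by omega) (by omega)
      have h1 : xg n 1 ∈ Msub n := Subgroup.subset_closure ⟨1, ⟨le_refl 1, by omega⟩, rfl⟩
      exact Subgroup.mul_mem _ (Subgroup.mul_mem _ (Subgroup.inv_mem _ h1) hmem) h1

lemma shift_M (n : ℕ) (hn : 2 ≤ n) {m : FnInfty n} (hm : m ∈ Msub n) :
    (xg n 0)⁻¹ * m * xg n 0 ∈ Msub n := by
  set x0 := xg n 0
  have : Msub n ≤ (Msub n).comap ((MulAut.conj x0⁻¹).toMonoidHom) := by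
    rw [Msub, Subgroup.closure_le]
    rintro _ ⟨i, ⟨hi1, hin⟩, rfl⟩
    have hrel := xg_rel n (i := i) (j := 0) hi1
    have : (MulAut.conj x0⁻¹).toMonoidHom (xg n i) = x0⁻¹ * xg n i * x0 := by
      simp [MulAut.conj_apply]
    rw [SetLike.mem_coe, Subgroup.mem_comap, this, hrel]
    exact xg_mem_M n hn _ (by omega)
  have := this hm
  simpa [MulAut.conj_apply, mul_assoc] using this


noncomputable def phi (n : ℕ) (hn : 2 ≤ n) : FnInfty n →* Multiplicative ℤ :=
  PresentedGroup.toGroup (f := fun i => if i = 0 then Multiplicative.ofAdd (1 : ℤ) else 1)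
    (by
      rintro r ⟨i, j, hij, rfl⟩
      have hi : i ≠ 0 := by omega
      have hin : i + n - 1 ≠ 0 := by omega
      by_cases hj : j = 0 <;> simp [hj, hi, hin])

lemma phi_xg0 (n : ℕ) (hn : 2 ≤ n) : phi n hn (xg n 0) = Multiplicative.ofAdd (1 : ℤ) := by
  simp [phi, xg]

lemma phi_xg (n : ℕ) (hn : 2 ≤ n) {i : ℕ} (hi : 1 ≤ i) : phi n hn (xg n i) = 1 := by
  have : i ≠ 0 := by omega
  simp [phi, xg, this]


lemma sigma_pow_M (n : ℕ) (hn : 2 ≤ n) : ∀ (t : ℕ) {m : FnInfty n}, m ∈ Msub n →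
    ((xg n 0) ^ t)⁻¹ * m * (xg n 0) ^ t ∈ Msub n := by
  intro t
  induction t with
  | zero => intro m hm; simpa using hm
  | succ t ih =>
    intro m hm
    have h1 := shift_M n hn (ih hm)
    have : ((xg n 0) ^ (t+1))⁻¹ * m * (xg n 0) ^ (t+1)
        = (xg n 0)⁻¹ * (((xg n 0) ^ t)⁻¹ * m * (xg n 0) ^ t) * xg n 0 := by
      rw [pow_succ]; group
    rw [this]
    exact h1

/-- membership in the union of conjugates of `M` by powers of `x0`. -/
def inU (n : ℕ) (g : FnInfty n) : Prop :=
  ∃ j : ℕ, ((xg n 0) ^ j)⁻¹ * g * (xg n 0) ^ j ∈ Msub n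

lemma inU_ge (n : ℕ) (hn : 2 ≤ n) {g : FnInfty n} {j j' : ℕ} (hjj : j ≤ j')
    (h : ((xg n 0) ^ j)⁻¹ * g * (xg n 0) ^ j ∈ Msub n) :
    ((xg n 0) ^ j')⁻¹ * g * (xg n 0) ^ j' ∈ Msub n := by
  obtain ⟨t, rfl⟩ := Nat.exists_eq_add_of_le hjj
  induction t with
  | zero => simpa using h
  | succ t ih =>
    have h1 := shift_M n hn (ih (Nat.le_add_right j t))
    have : ((xg n 0) ^ (j+(t+1)))⁻¹ * g * (xg n 0) ^ (j+(t+1))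
        = (xg n 0)⁻¹ * (((xg n 0) ^ (j+t))⁻¹ * g * (xg n 0) ^ (j+t)) * xg n 0 := by
      rw [← add_assoc, pow_succ]; group
    rw [this]
    exact h1

lemma inU_one (n : ℕ) : inU n 1 := ⟨0, by simpa using (Msub n).one_mem⟩

lemma inU_mul (n : ℕ) (hn : 2 ≤ n) {a b : FnInfty n} (ha : inU n a) (hb : inU n b) :
    inU n (a * b) := by
  obtain ⟨j1, h1⟩ := ha
  obtain ⟨j2, h2⟩ := hb
  refine ⟨max j1 j2, ?_⟩
  have h1' := inU_ge n hn (le_max_left j1 j2) h1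
  have h2' := inU_ge n hn (le_max_right j1 j2) h2
  have : ((xg n 0) ^ (max j1 j2))⁻¹ * (a * b) * (xg n 0) ^ (max j1 j2)
      = (((xg n 0) ^ (max j1 j2))⁻¹ * a * (xg n 0) ^ (max j1 j2)) *
        (((xg n 0) ^ (max j1 j2))⁻¹ * b * (xg n 0) ^ (max j1 j2)) := by group
  rw [this]
  exact (Msub n).mul_mem h1' h2'

lemma inU_inv (n : ℕ) {a : FnInfty n} (ha : inU n a) : inU n a⁻¹ := by
  obtain ⟨j, h⟩ := ha
  refine ⟨j, ?_⟩
  have : ((xg n 0) ^ j)⁻¹ * a⁻¹ * (xg n 0) ^ j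
      = (((xg n 0) ^ j)⁻¹ * a * (xg n 0) ^ j)⁻¹ := by group
  rw [this]
  exact (Msub n).inv_mem h

lemma inU_conj (n : ℕ) (hn : 2 ≤ n) (z : ℤ) {a : FnInfty n} (ha : inU n a) :
    inU n (((xg n 0) ^ z)⁻¹ * a * (xg n 0) ^ z) := by
  obtain ⟨j, h⟩ := ha
  set x0 := xg n 0
  have he : (0:ℤ) ≤ (j : ℤ) + z.natAbs - z := by
    have h2 : z ≤ (z.natAbs : ℤ) := Int.le_natAbs
    omega
  set e : ℕ := ((j : ℤ) + z.natAbs - z).toNat with hedef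
  have hee : (e : ℤ) = (j : ℤ) + z.natAbs - z := Int.toNat_of_nonneg he
  refine ⟨e, ?_⟩
  have hkey : (x0 ^ e)⁻¹ * ((x0 ^ z)⁻¹ * a * x0 ^ z) * x0 ^ e
      = (x0 ^ (j + z.natAbs))⁻¹ * a * x0 ^ (j + z.natAbs) := by
    have e1 : (x0 : FnInfty n) ^ e = x0 ^ ((j:ℤ) + z.natAbs - z) := by
      rw [← hee, zpow_natCast]
    have e2 : (x0 : FnInfty n) ^ (j + z.natAbs) = x0 ^ ((j:ℤ) + (z.natAbs:ℤ)) := by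
      rw [← zpow_natCast]; push_cast; ring_nf
    rw [e1, e2, sub_eq_add_neg, zpow_add, zpow_add, zpow_neg]
    group
  rw [hkey]
  exact inU_ge n hn (Nat.le_add_right j z.natAbs) h


lemma ker_inU (n : ℕ) (hn : 2 ≤ n) {g : FnInfty n} (hg : phi n hn g = 1) : inU n g := by
  set x0 := xg n 0 with hx0
  set ψ : FnInfty n → ℤ := fun g => Multiplicative.toAdd (phi n hn g) with hψ
  have hψmul : ∀ a b, ψ (a * b) = ψ a + ψ b := by intro a b; simp [hψ, map_mul]
  have hψinv : ∀ a, ψ a⁻¹ = -ψ a := by intro a; simp [hψ]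
  let V : Subgroup (FnInfty n) :=
  { carrier := {g | inU n (g * x0 ^ (-(ψ g)))}
    one_mem' := by
      show inU n ((1 : FnInfty n) * x0 ^ (-(ψ 1)))
      have : (1 : FnInfty n) * x0 ^ (-(ψ 1)) = 1 := by simp [hψ]
      rw [this]; exact inU_one n
    mul_mem' := by
      intro a b ha hb
      simp only [Set.mem_setOf_eq] at *
      have key : a * b * x0 ^ (-(ψ (a * b))) =
          (a * x0 ^ (-(ψ a))) * ((x0 ^ (-(ψ a)))⁻¹ * (b * x0 ^ (-(ψ b))) * x0 ^ (-(ψ a))) := by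
        rw [hψmul, neg_add, zpow_add]
        group
      rw [key]
      exact inU_mul n hn ha (inU_conj n hn _ hb)
    inv_mem' := by
      intro a ha
      simp only [Set.mem_setOf_eq] at *
      have key : a⁻¹ * x0 ^ (-(ψ a⁻¹)) =
          ((x0 ^ (ψ a))⁻¹ * (a * x0 ^ (-(ψ a))) * x0 ^ (ψ a))⁻¹ := by
        rw [hψinv, neg_neg, zpow_neg]
        group
      rw [key]
      exact inU_inv n (inU_conj n hn _ ha) }
  have hgen : ∀ j : ℕ, PresentedGroup.of (rels := thompsonRels n) j ∈ V := by
    intro j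
    show inU n (PresentedGroup.of j * x0 ^ (-(ψ (PresentedGroup.of j))))
    cases j with
    | zero =>
      have h1 : ψ (PresentedGroup.of (rels := thompsonRels n) 0) = 1 := by
        have : PresentedGroup.of (rels := thompsonRels n) 0 = xg n 0 := rfl
        rw [this]
        simp [hψ, phi_xg0 n hn]
      rw [h1]
      have h2 : PresentedGroup.of (rels := thompsonRels n) 0 * x0 ^ (-(1:ℤ)) = 1 := by
        have : PresentedGroup.of (rels := thompsonRels n) 0 = x0 := rfl
        rw [this, zpow_neg, zpow_one, mul_inv_cancel]
      rw [h2]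
      exact inU_one n
    | succ i =>
      have h1 : ψ (PresentedGroup.of (rels := thompsonRels n) (i + 1)) = 0 := by
        have : PresentedGroup.of (rels := thompsonRels n) (i + 1) = xg n (i + 1) := rfl
        rw [this]
        simp [hψ, phi_xg n hn (Nat.le_add_left 1 i)]
      rw [h1]
      refine ⟨0, ?_⟩
      have : PresentedGroup.of (rels := thompsonRels n) (i + 1) = xg n (i + 1) := rfl
      simpa [this] using xg_mem_M n hn (i + 1) (Nat.le_add_left 1 i)
  have hmem : g ∈ V := PresentedGroup.generated_by (thompsonRels n) V hgen g
  have h2 : inU n (g * x0 ^ (-(ψ g))) := hmem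
  have h3 : ψ g = 0 := by simp [hψ, hg]
  rw [h3] at h2
  simpa using h2


lemma sigma_pow_HM (n : ℕ) (hn : 2 ≤ n) (H : Subgroup (FnInfty n)) (hnorm : H.Normal)
    (t : ℕ) {h : FnInfty n} (hh : h ∈ H ⊓ Msub n) :
    ((xg n 0) ^ t)⁻¹ * h * (xg n 0) ^ t ∈ H ⊓ Msub n := by
  obtain ⟨hH, hM⟩ := Subgroup.mem_inf.mp hh
  refine Subgroup.mem_inf.mpr ⟨?_, sigma_pow_M n hn t hM⟩
  have := hnorm.conj_mem h hH ((xg n 0) ^ t)⁻¹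
  simpa [inv_inv] using this

lemma conj_mem_C (n : ℕ) (hn : 2 ≤ n) (H : Subgroup (FnInfty n)) (hnorm : H.Normal)
    (α : ℕ) (hα : 0 < α) {j : ℤ} {h : FnInfty n} (hh : h ∈ H ⊓ Msub n) :
    ((xg n 0) ^ j)⁻¹ * h * (xg n 0) ^ j ∈
      Subgroup.closure ({(xg n 0) ^ α} ∪ ((H ⊓ Msub n : Subgroup (FnInfty n)) : Set (FnInfty n))) := by
  set x0 := xg n 0 with hx0
  set C := Subgroup.closure ({(x0 : FnInfty n) ^ α} ∪ ((H ⊓ Msub n : Subgroup (FnInfty n)) : Set (FnInfty n))) with hC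
  have hx0C : (x0 : FnInfty n) ^ α ∈ C := Subgroup.subset_closure (Or.inl rfl)
  set q := j.natAbs with hq
  have h1 : (1:ℤ) ≤ (α:ℤ) := by exact_mod_cast hα
  have h2 : (q:ℤ) ≤ (q:ℤ) * α := le_mul_of_one_le_right (Int.natCast_nonneg q) h1
  have h3 : -j ≤ (q:ℤ) := by
    have := Int.le_natAbs (a := -j)
    rwa [Int.natAbs_neg] at this
  have hnn : (0:ℤ) ≤ (q:ℤ) * α + j := by linarith
  set t : ℕ := ((q:ℤ) * α + j).toNat with htdef
  have ht : (t:ℤ) = (q:ℤ) * α + j := Int.toNat_of_nonneg hnn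
  have hinner : ((x0 : FnInfty n) ^ t)⁻¹ * h * x0 ^ t ∈ H ⊓ Msub n := sigma_pow_HM n hn H hnorm t hh
  have hkey : ((x0 : FnInfty n) ^ j)⁻¹ * h * x0 ^ j
      = (x0 ^ α) ^ q * (((x0 : FnInfty n) ^ t)⁻¹ * h * x0 ^ t) * ((x0 ^ α) ^ q)⁻¹ := by
    have e1 : ((x0 : FnInfty n) ^ α) ^ q = x0 ^ ((q:ℤ) * α) := by
      rw [← pow_mul, ← zpow_natCast]
      push_cast
      ring_nf
    have e2 : ((x0 : FnInfty n) ^ t) = x0 ^ ((q:ℤ) * α + j) := by rw [← zpow_natCast, ht]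
    rw [e1, e2, zpow_add]
    group
  rw [hkey]
  exact C.mul_mem (C.mul_mem (C.pow_mem hx0C q) (Subgroup.subset_closure (Or.inr hinner)))
    (C.inv_mem (C.pow_mem hx0C q))

lemma ker_mem_C (n : ℕ) (hn : 2 ≤ n) (H : Subgroup (FnInfty n)) (hnorm : H.Normal)
    (α : ℕ) (hα : 0 < α) {g : FnInfty n} (hgH : g ∈ H) (hg1 : phi n hn g = 1) :
    g ∈ Subgroup.closure ({(xg n 0) ^ α} ∪ ((H ⊓ Msub n : Subgroup (FnInfty n)) : Set (FnInfty n))) := by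
  set x0 := xg n 0 with hx0
  obtain ⟨j, hj⟩ := ker_inU n hn hg1
  have hjH : ((x0 : FnInfty n) ^ j)⁻¹ * g * x0 ^ j ∈ H := by
    have := hnorm.conj_mem g hgH ((x0 : FnInfty n) ^ j)⁻¹
    simpa [inv_inv] using this
  have hj' : ((x0 : FnInfty n) ^ j)⁻¹ * g * x0 ^ j ∈ H ⊓ Msub n := Subgroup.mem_inf.mpr ⟨hjH, hj⟩
  have hres := conj_mem_C n hn H hnorm α hα (j := -(j:ℤ)) hj'
  have hkey : ((x0 : FnInfty n) ^ (-(j:ℤ)))⁻¹ * (((x0 : FnInfty n) ^ j)⁻¹ * g * x0 ^ j) * x0 ^ (-(j:ℤ)) = g := by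
    have e1 : ((x0 : FnInfty n) ^ j) = x0 ^ ((j:ℤ)) := by rw [← zpow_natCast]
    rw [e1, zpow_neg]
    group
  rwa [hkey] at hres


/-- Let `H` be a normal finite-index subgroup of `G = F_{n,∞}`, `α` the smallest positive
integer with `x_0^α ∈ H`, and `B = ⟨x_0^α, ⋃_{j ∈ ℤ} (H ∩ M)^{x_0^j}⟩`. Then
`B = ⟨x_0^α, H ∩ M⟩` and `H/B` is finite cyclic. -/
theorem stmt_7 (n : ℕ) (hn : 2 ≤ n) (H : Subgroup (FnInfty n)) (hnorm : H.Normal)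
    (hfi : H.FiniteIndex) (α : ℕ) (hα : 0 < α) (hmem : (xg n 0) ^ α ∈ H)
    (hmin : ∀ β : ℕ, 0 < β → (xg n 0) ^ β ∈ H → α ≤ β)
    (B : Subgroup (FnInfty n))
    (hB : B = Subgroup.closure ({(xg n 0) ^ α} ∪
      ⋃ j : ℤ, (fun h => ((xg n 0) ^ j)⁻¹ * h * (xg n 0) ^ j) '' ((H ⊓ Msub n : Subgroup _) : Set (FnInfty n)))) :
    B = Subgroup.closure ({(xg n 0) ^ α} ∪ ((H ⊓ Msub n : Subgroup _) : Set (FnInfty n))) ∧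
    B ≤ H ∧ B.relIndex H ≠ 0 ∧
    (∃ h ∈ H, ∀ g ∈ H, ∃ k : ℤ, g * h ^ k ∈ B) := by
  set x0 := xg n 0 with hx0
  set C := Subgroup.closure ({(x0 : FnInfty n) ^ α} ∪ ((H ⊓ Msub n : Subgroup (FnInfty n)) : Set (FnInfty n))) with hC
  -- part 1 : B = C
  have hBC : B = C := by
    apply le_antisymm
    · rw [hB]
      apply Subgroup.closure_le C |>.mpr
      rintro x (hx | hx)
      · exact Subgroup.subset_closure (Or.inl hx)
      · obtain ⟨j, h, hh, rfl⟩ := by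
          simpa only [Set.mem_iUnion, Set.mem_image] using hx
        exact conj_mem_C n hn H hnorm α hα (SetLike.mem_coe.mp hh)
    · rw [hB]
      apply Subgroup.closure_mono
      apply Set.union_subset_union_right
      intro h hh
      refine Set.mem_iUnion.mpr ⟨0, ⟨h, hh, by simp⟩⟩
  -- part 2 : B ≤ H
  have hBH : B ≤ H := by
    rw [hB]
    apply Subgroup.closure_le H |>.mpr
    rintro x (hx | hx)
    · rw [Set.mem_singleton_iff.mp hx]; exact hmem
    · obtain ⟨j, h, hh, rfl⟩ := by
        simpa only [Set.mem_iUnion, Set.mem_image] using hx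
      have hhH : h ∈ H := (Subgroup.mem_inf.mp (SetLike.mem_coe.mp hh)).1
      have := hnorm.conj_mem h hhH ((x0 : FnInfty n) ^ (j:ℤ))⁻¹
      simpa [inv_inv] using this
  -- ψ and the image subgroup A
  set ψ : FnInfty n → ℤ := fun g => Multiplicative.toAdd (phi n hn g) with hψ
  have hψmul : ∀ a b, ψ (a * b) = ψ a + ψ b := by intro a b; simp [hψ, map_mul]
  have hψzpow : ∀ (g : FnInfty n) (k : ℤ), ψ (g ^ k) = k * ψ g := by
    intro g k; simp [hψ, map_zpow, toAdd_zpow, smul_eq_mul]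
  have hψpow : ∀ (g : FnInfty n) (k : ℕ), ψ (g ^ k) = k * ψ g := by
    intro g k; simp [hψ, map_pow, toAdd_pow, smul_eq_mul]
  have hψx0 : ψ x0 = 1 := by simp [hψ, hx0, phi_xg0 n hn]
  -- membership in B of elements of H with ψ = 0
  have key0 : ∀ g ∈ H, ψ g = 0 → g ∈ B := by
    intro g hgH hg0
    have h1 : phi n hn g = 1 := by
      have : phi n hn g = Multiplicative.ofAdd (ψ g) := by simp [hψ]
      rw [this, hg0]; rfl
    rw [hBC]
    exact ker_mem_C n hn H hnorm α hα hgH h1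
  -- A = ψ(H)
  set A : AddSubgroup ℤ :=
    { carrier := {z : ℤ | ∃ g ∈ H, ψ g = z}
      zero_mem' := ⟨1, H.one_mem, by simp [hψ]⟩
      add_mem' := by
        rintro a b ⟨x, hxH, rfl⟩ ⟨y, hyH, rfl⟩
        exact ⟨x * y, H.mul_mem hxH hyH, hψmul x y⟩
      neg_mem' := by
        rintro a ⟨x, hxH, rfl⟩
        exact ⟨x⁻¹, H.inv_mem hxH, by simp [hψ]⟩ } with hA
  obtain ⟨a, hAa⟩ := Int.subgroup_cyclic A
  have hαA : (α : ℤ) ∈ A := ⟨x0 ^ α, hmem, by rw [hψpow, hψx0, mul_one]⟩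
  have hdvd : ∀ z ∈ A, ∃ k : ℤ, z = k * a := by
    intro z hz
    rw [hAa] at hz
    obtain ⟨k, hk⟩ := AddSubgroup.mem_closure_singleton.mp hz
    exact ⟨k, by rw [← hk, smul_eq_mul]⟩
  have ha0 : a ≠ 0 := by
    intro h0
    obtain ⟨k, hk⟩ := hdvd _ hαA
    rw [h0, mul_zero] at hk
    omega
  have haA : a ∈ A := by
    rw [hAa]
    exact AddSubgroup.mem_closure_singleton.mpr ⟨1, one_smul _ _⟩
  obtain ⟨g0, hg0H, hg0ψ⟩ := haA
  have hx0B : (x0 : FnInfty n) ^ α ∈ B := by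
    rw [hB]; exact Subgroup.subset_closure (Or.inl rfl)
  -- g0 ^ α ∈ B
  have hg0αB : g0 ^ α ∈ B := by
    have hwH : g0 ^ α * ((x0 : FnInfty n) ^ α) ^ (-a) ∈ H :=
      H.mul_mem (H.pow_mem hg0H α) (H.zpow_mem hmem (-a))
    have hwψ : ψ (g0 ^ α * ((x0 : FnInfty n) ^ α) ^ (-a)) = 0 := by
      rw [hψmul, hψpow, hψzpow, hψpow, hψx0, hg0ψ]
      ring
    have hwB := key0 _ hwH hwψ
    have heq : g0 ^ α = (g0 ^ α * ((x0 : FnInfty n) ^ α) ^ (-a)) * ((x0 : FnInfty n) ^ α) ^ a := by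
      rw [mul_assoc, ← zpow_add, neg_add_cancel, zpow_zero, mul_one]
    rw [heq]
    exact B.mul_mem hwB (B.zpow_mem hx0B a)
  -- left coset representatives
  have hleft : ∀ g ∈ H, ∃ k : ℤ, g0 ^ k * g ∈ B := by
    intro g hgH
    obtain ⟨c, hc⟩ := hdvd (ψ g) ⟨g, hgH, rfl⟩
    refine ⟨-c, key0 _ (H.mul_mem (H.zpow_mem hg0H _) hgH) ?_⟩
    rw [hψmul, hψzpow, hg0ψ, hc]
    ring
  -- relindex ≠ 0
  have hrel : B.relIndex H ≠ 0 := by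
    set K := B.subgroupOf H with hK
    have hsurj : Function.Surjective
        (fun r : Fin α => (QuotientGroup.mk (⟨g0 ^ (-(r:ℤ)), H.zpow_mem hg0H _⟩ : H) : H ⧸ K)) := by
      intro q
      refine QuotientGroup.induction_on q ?_
      intro x
      obtain ⟨k, hk⟩ := hleft (x : FnInfty n) x.2
      have hαz : (0:ℤ) < (α:ℤ) := by exact_mod_cast hα
      have hnn : (0:ℤ) ≤ k % (α:ℤ) := Int.emod_nonneg k (by omega)
      set r : ℕ := (k % (α:ℤ)).toNat with hr
      have hrz : (r:ℤ) = k % (α:ℤ) := Int.toNat_of_nonneg hnn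
      have hrlt : r < α := by
        have h1 := Int.emod_lt_of_pos k hαz
        omega
      refine ⟨⟨r, hrlt⟩, ?_⟩
      apply (QuotientGroup.eq).mpr
      rw [hK, Subgroup.mem_subgroupOf]
      have hcoe : ((((⟨g0 ^ (-(r:ℤ)), H.zpow_mem hg0H _⟩ : H))⁻¹ * x : H) : FnInfty n)
          = g0 ^ ((r:ℤ)) * (x : FnInfty n) := by
        push_cast
        rw [← zpow_neg, neg_neg]
      rw [hcoe]
      have h5 : (r:ℤ) - k = (α:ℤ) * (-(k / (α:ℤ))) := by
        have h6 := Int.mul_ediv_add_emod k (α:ℤ)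
        rw [hrz]
        linarith
      have heq2 : g0 ^ ((r:ℤ)) * (x : FnInfty n) = g0 ^ ((r:ℤ) - k) * (g0 ^ k * (x : FnInfty n)) := by
        rw [← mul_assoc, ← zpow_add, sub_add_cancel]
      rw [heq2]
      refine B.mul_mem ?_ hk
      rw [h5, zpow_mul, zpow_natCast]
      exact B.zpow_mem hg0αB _
    have hfin : Finite (H ⧸ K) := Finite.of_surjective _ hsurj
    exact Subgroup.index_ne_zero_of_finite
  -- final cyclic generation
  refine ⟨hBC, hBH, hrel, ⟨g0, hg0H, ?_⟩⟩
  intro g hgH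
  obtain ⟨c, hc⟩ := hdvd (ψ g) ⟨g, hgH, rfl⟩
  refine ⟨-c, key0 _ (H.mul_mem hgH (H.zpow_mem hg0H _)) ?_⟩
  rw [hψmul, hψzpow, hg0ψ, hc]
  ring
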